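/- Let E ⊂ [0,1] be an uncountable Borel set. Then there exists a continuous function f : [0,1] → [0,1] such that the upper-scaled oscillation L_f(x) is finite for every x ∈ [0,1] \ E, and for every y ∈ [0,1] the level set f⁻¹(y) is infinite. -/

import Mathlib

open Set MeasureTheory Metric Filter
open scoped ENNReal NNReal Topology

/-- Lower-scaled oscillation of `f` with domain `A`:
`l_f(x) = liminf_{r→0⁺} (sup_{y ∈ A, dist y x ≤ r} dist (f y) (f x)) / r`. -/
noncomputable def lowerScaledOsc {E F : Type*} [PseudoMetricSpace E] [PseudoMetricSpace F]
    (A : Set E) (f : E → F) (x : E) : ℝ≥0∞ :=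
  Filter.liminf
    (fun r : ℝ =>
      (⨆ (y : E) (_ : y ∈ A) (_ : dist y x ≤ r), ENNReal.ofReal (dist (f y) (f x))) /
        ENNReal.ofReal r)
    (nhdsWithin 0 (Set.Ioi 0))

/-- Upper-scaled oscillation of `f` with domain `A`:
`L_f(x) = limsup_{r→0⁺} (sup_{y ∈ A, dist y x ≤ r} dist (f y) (f x)) / r`. -/
noncomputable def upperScaledOsc {E F : Type*} [PseudoMetricSpace E] [PseudoMetricSpace F]
    (A : Set E) (f : E → F) (x : E) : ℝ≥0∞ :=
  Filter.limsup
    (fun r : ℝ =>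
      (⨆ (y : E) (_ : y ∈ A) (_ : dist y x ≤ r), ENNReal.ofReal (dist (f y) (f x))) /
        ENNReal.ofReal r)
    (nhdsWithin 0 (Set.Ioi 0))

lemma urysohn_diff_bound {Fs T : Set ℝ} {x z : ℝ}
    (hDx : 0 < Metric.infDist x Fs + Metric.infDist x T)
    (hDz : 0 < Metric.infDist z Fs + Metric.infDist z T)
    :
    |Metric.infDist x Fs / (Metric.infDist x Fs + Metric.infDist x T)
      - Metric.infDist z Fs / (Metric.infDist z Fs + Metric.infDist z T)|
      ≤ dist x z / (Metric.infDist z Fs + Metric.infDist z T) := by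
  set a := Metric.infDist x Fs with ha
  set b := Metric.infDist x T with hb
  set c := Metric.infDist z Fs with hc
  set e := Metric.infDist z T with he
  have ha0 : 0 ≤ a := Metric.infDist_nonneg
  have hb0 : 0 ≤ b := Metric.infDist_nonneg
  have hc0 : 0 ≤ c := Metric.infDist_nonneg
  have he0 : 0 ≤ e := Metric.infDist_nonneg
  have hac : |a - c| ≤ dist x z := by
    rw [abs_sub_le_iff]
    constructor
    · have := Metric.infDist_le_infDist_add_dist (x := x) (y := z) (s := Fs)
      linarith
    · have := Metric.infDist_le_infDist_add_dist (x := z) (y := x) (s := Fs)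
      rw [dist_comm] at this; linarith
  have hbe : |b - e| ≤ dist x z := by
    rw [abs_sub_le_iff]
    constructor
    · have := Metric.infDist_le_infDist_add_dist (x := x) (y := z) (s := T)
      linarith
    · have := Metric.infDist_le_infDist_add_dist (x := z) (y := x) (s := T)
      rw [dist_comm] at this; linarith
  rw [div_sub_div _ _ hDx.ne' hDz.ne', abs_div, abs_of_pos (mul_pos hDx hDz)]
  have hnum : |a * (c + e) - (a + b) * c| ≤ (a + b) * dist x z := by
    rw [abs_le] at hac hbe ⊢
    constructor <;> nlinarith [hac.1, hac.2, hbe.1, hbe.2]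
  calc |a * (c + e) - (a + b) * c| / ((a + b) * (c + e))
      ≤ ((a + b) * dist x z) / ((a + b) * (c + e)) := by
        exact (div_le_div_iff_of_pos_right (mul_pos hDx hDz)).2 hnum
      _ = dist x z / (c + e) := by
        rw [mul_div_mul_left _ _ (by positivity : (a + b) ≠ 0)]

noncomputable def digSeq (y : ℝ) : ℕ → ℝ
  | 0 => y
  | n + 1 => if 1/2 ≤ digSeq y n then 2 * digSeq y n - 1 else 2 * digSeq y n

lemma digSeq_mem {y : ℝ} (hy : y ∈ Set.Icc (0:ℝ) 1) :
    ∀ n, digSeq y n ∈ Set.Icc (0:ℝ) 1 := by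
  intro n
  induction n with
  | zero => exact hy
  | succ n ih =>
    obtain ⟨h0, h1⟩ := ih
    simp only [digSeq]
    split_ifs with h
    · constructor <;> [linarith; linarith]
    · push_neg at h
      constructor <;> [linarith; linarith]

lemma digSeq_partial (y : ℝ) (n : ℕ) :
    ∑ k ∈ Finset.range n, (if 1/2 ≤ digSeq y k then ((2:ℝ)⁻¹)^(k+1) else 0)
      = y - digSeq y n * ((2:ℝ)⁻¹)^n := by
  induction n with
  | zero => simp [digSeq]
  | succ n ih =>
    rw [Finset.sum_range_succ, ih]
    have hrec : digSeq y (n+1)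
        = if 1/2 ≤ digSeq y n then 2 * digSeq y n - 1 else 2 * digSeq y n := rfl
    rw [hrec]
    split_ifs with h
    · ring
    · ring

lemma exists_bool_rep {y : ℝ} (hy : y ∈ Set.Icc (0:ℝ) 1) :
    ∃ d : ℕ → Bool, ∑' k : ℕ, ((2:ℝ)⁻¹)^(k+1) * (cond (d k) 1 0) = y := by
  classical
  refine ⟨fun k => decide (1/2 ≤ digSeq y k), ?_⟩
  have hcong : ∀ k : ℕ, ((2:ℝ)⁻¹)^(k+1) * (cond (decide (1/2 ≤ digSeq y k)) (1:ℝ) 0)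
      = if 1/2 ≤ digSeq y k then ((2:ℝ)⁻¹)^(k+1) else 0 := by
    intro k
    by_cases h : 1/2 ≤ digSeq y k
    · have h' : (2:ℝ)⁻¹ ≤ digSeq y k := by rw [← one_div]; exact h
      simp [h, h']
    · have h' : ¬ (2:ℝ)⁻¹ ≤ digSeq y k := by rw [← one_div]; exact h
      simp [h, h']
  rw [tsum_congr hcong]
  set u : ℕ → ℝ := fun k => if 1/2 ≤ digSeq y k then ((2:ℝ)⁻¹)^(k+1) else 0 with hu
  have hsum : Summable u := by
    apply Summable.of_nonneg_of_le (fun k => ?_) (fun k => ?_)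
      (((summable_geometric_of_lt_one (by norm_num) (by norm_num : (2:ℝ)⁻¹ < 1))).mul_left (2:ℝ)⁻¹)
    · simp only [hu]; split_ifs <;> positivity
    · simp only [hu]; split_ifs
      · rw [pow_succ]; ring_nf; exact le_refl _
      · positivity
  have h1 : Tendsto (fun n => ∑ k ∈ Finset.range n, u k) atTop (𝓝 (∑' k, u k)) :=
    hsum.hasSum.tendsto_sum_nat
  have h2 : Tendsto (fun n => ∑ k ∈ Finset.range n, u k) atTop (𝓝 y) := by
    have heq : (fun n => ∑ k ∈ Finset.range n, u k)
        = fun n => y - digSeq y n * ((2:ℝ)⁻¹)^n := by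
      funext n; exact digSeq_partial y n
    rw [heq]
    have h3 : Tendsto (fun n : ℕ => digSeq y n * ((2:ℝ)⁻¹)^n) atTop (𝓝 0) := by
      apply squeeze_zero (fun n => ?_) (fun n => ?_)
        (tendsto_pow_atTop_nhds_zero_of_lt_one (by norm_num) (by norm_num : (2:ℝ)⁻¹ < 1))
      · have h4 := digSeq_mem hy n
        have h5 : ((2:ℝ)⁻¹)^n ≥ 0 := by positivity
        nlinarith [h4.1]
      · have h4 := digSeq_mem hy n
        have : ((2:ℝ)⁻¹)^n ≥ 0 := by positivity
        nlinarith [h4.1, h4.2]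
    simpa using (tendsto_const_nhds (x := y)).sub h3
  exact tendsto_nhds_unique h1 h2

lemma exists_cantor_inj (E : Set ℝ) (hBorel : MeasurableSet E) (hunc : ¬ E.Countable) :
    ∃ h : (ℕ → Bool) → ℝ, Set.range h ⊆ E ∧ Continuous h ∧ Function.Injective h := by
  obtain ⟨t', ht'le, ht'polish, hEclosed, -⟩ := hBorel.isClopenable
  obtain ⟨h, hrangeE, hcont', hinj⟩ :=
    @IsClosed.exists_nat_bool_injection_of_not_countable ℝ t' ht'polish E hEclosed hunc
  refine ⟨h, hrangeE, ?_, hinj⟩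
  rw [continuous_def]
  intro s hs
  exact hcont'.isOpen_preimage s (hs.mono ht'le)

/-- For every uncountable Borel set `E ⊆ [0,1]` there is a continuous
`f : [0,1] → [0,1]` whose upper-scaled oscillation is finite at every point of
`[0,1] \ E`, all of whose level sets are infinite. -/
theorem stmt8 (E : Set ℝ) (hE : E ⊆ Set.Icc 0 1) (hBorel : MeasurableSet E)
    (hunc : ¬ E.Countable) :
    ∃ f : ℝ → ℝ,
      ContinuousOn f (Set.Icc 0 1) ∧
      Set.MapsTo f (Set.Icc 0 1) (Set.Icc 0 1) ∧
      (∀ x ∈ Set.Icc (0:ℝ) 1 \ E, upperScaledOsc (Set.Icc 0 1) f x < ⊤) ∧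
      (∀ y ∈ Set.Icc (0:ℝ) 1, (Set.Icc (0:ℝ) 1 ∩ f ⁻¹' {y}).Infinite) := by
  classical
  obtain ⟨h, hrangeE, hcont, hinj⟩ := exists_cantor_inj E hBorel hunc
  set C : Set ℝ := Set.range h with hC
  have hCne : C.Nonempty := ⟨h (fun _ => true), Set.mem_range_self _⟩
  have hCcomp : IsCompact C := isCompact_range hcont
  have hCclosed : IsClosed C := hCcomp.isClosed
  have hCE : C ⊆ E := hrangeE
  -- bit sets
  set T : ℕ → Set ℝ := fun k => h '' {b | b (2*k) = true} with hT
  set Fs : ℕ → Set ℝ := fun k => h '' {b | b (2*k) = false} with hFs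
  have hTsub : ∀ k, T k ⊆ C := fun k => Set.image_subset_range _ _
  have hFsub : ∀ k, Fs k ⊆ C := fun k => Set.image_subset_range _ _
  have hTne : ∀ k, (T k).Nonempty := fun k => ⟨h (fun _ => true), ⟨fun _ => true, rfl, rfl⟩⟩
  have hFne : ∀ k, (Fs k).Nonempty := fun k => ⟨h (fun _ => false), ⟨fun _ => false, rfl, rfl⟩⟩
  have hTclosed : ∀ k, IsClosed (T k) := fun k =>
    ((isClosed_singleton.preimage (continuous_apply (2*k))).isCompact.image hcont).isClosed
  have hFclosed : ∀ k, IsClosed (Fs k) := fun k =>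
    ((isClosed_singleton.preimage (continuous_apply (2*k))).isCompact.image hcont).isClosed
  have hdisj : ∀ k x, x ∈ Fs k → x ∈ T k → False := by
    rintro k x ⟨b, hb, hbx⟩ ⟨b', hb', hb'x⟩
    have hbb : b = b' := hinj (hbx.trans hb'x.symm)
    rw [hbb] at hb
    rw [Set.mem_setOf_eq] at hb hb'
    rw [hb'] at hb
    exact Bool.noConfusion hb
  set D : ℕ → ℝ → ℝ := fun k x => Metric.infDist x (Fs k) + Metric.infDist x (T k) with hD
  have hDpos : ∀ k x, 0 < D k x := by
    intro k x
    rcases (add_nonneg Metric.infDist_nonneg Metric.infDist_nonneg :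
      (0:ℝ) ≤ Metric.infDist x (Fs k) + Metric.infDist x (T k)).lt_or_eq with hlt | heq
    · exact hlt
    · exfalso
      have hF0 : Metric.infDist x (Fs k) = 0 := by
        have := Metric.infDist_nonneg (x := x) (s := Fs k)
        have := Metric.infDist_nonneg (x := x) (s := T k)
        linarith
      have hT0 : Metric.infDist x (T k) = 0 := by
        have := Metric.infDist_nonneg (x := x) (s := Fs k)
        have := Metric.infDist_nonneg (x := x) (s := T k)
        linarith
      have hxF : x ∈ Fs k := by
        rw [← (hFclosed k).closure_eq]
        exact (Metric.mem_closure_iff_infDist_zero (hFne k)).2 hF0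
      have hxT : x ∈ T k := by
        rw [← (hTclosed k).closure_eq]
        exact (Metric.mem_closure_iff_infDist_zero (hTne k)).2 hT0
      exact hdisj k x hxF hxT
  set g : ℕ → ℝ → ℝ := fun k x => Metric.infDist x (Fs k) / D k x with hg
  have hg0 : ∀ k x, 0 ≤ g k x := fun k x =>
    div_nonneg Metric.infDist_nonneg (hDpos k x).le
  have hg1 : ∀ k x, g k x ≤ 1 := fun k x =>
    (div_le_one (hDpos k x)).2 (le_add_of_nonneg_right Metric.infDist_nonneg)
  set w : ℕ → ℝ := fun k => ((2:ℝ)⁻¹)^(k+1) with hw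
  have hw0 : ∀ k, 0 ≤ w k := fun k => by positivity
  have hwsum : Summable w := by
    have := (summable_geometric_of_lt_one (by norm_num : (0:ℝ) ≤ 2⁻¹)
      (by norm_num : (2:ℝ)⁻¹ < 1)).mul_right (2:ℝ)⁻¹
    simpa [hw, pow_succ] using this
  have hwtsum : ∑' k, w k = 1 := by
    have h2 : ∀ k : ℕ, w k = 1/2/2^k := by
      intro k
      show ((2:ℝ)⁻¹)^(k+1) = 1/2/2^k
      rw [pow_succ, inv_pow]
      ring
    rw [tsum_congr h2, tsum_geometric_two' 1]
  have hsummable : ∀ x, Summable fun k => w k * g k x := fun x =>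
    Summable.of_nonneg_of_le (fun k => mul_nonneg (hw0 k) (hg0 k x))
      (fun k => mul_le_of_le_one_right (hw0 k) (hg1 k x)) hwsum
  set f : ℝ → ℝ := fun x => ∑' k, w k * g k x with hf
  have hgcont : ∀ k, Continuous (g k) := fun k =>
    (Metric.continuous_infDist_pt _).div
      ((Metric.continuous_infDist_pt _).add (Metric.continuous_infDist_pt _))
      (fun x => (hDpos k x).ne')
  have hfcont : Continuous f := by
    apply continuous_tsum (fun k => continuous_const.mul (hgcont k)) hwsum
    intro k x
    show ‖w k * g k x‖ ≤ w k
    rw [Real.norm_eq_abs, abs_mul, abs_of_nonneg (hw0 k), abs_of_nonneg (hg0 k x)]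
    exact mul_le_of_le_one_right (hw0 k) (hg1 k x)
  have hf0 : ∀ x, 0 ≤ f x := fun x =>
    tsum_nonneg (fun k => mul_nonneg (hw0 k) (hg0 k x))
  have hf1 : ∀ x, f x ≤ 1 := by
    intro x
    have := Summable.tsum_le_tsum (fun k => mul_le_of_le_one_right (hw0 k) (hg1 k x))
      (hsummable x) hwsum
    rwa [hwtsum] at this
  -- value of f on C
  have hfh : ∀ b : ℕ → Bool, f (h b) = ∑' k, w k * (cond (b (2*k)) 1 0) := by
    intro b
    apply tsum_congr
    intro k
    congr 1
    cases hbk : b (2*k)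
    · have hmem : h b ∈ Fs k := ⟨b, hbk, rfl⟩
      simp [hg, Metric.infDist_zero_of_mem hmem]
    · have hmem : h b ∈ T k := ⟨b, hbk, rfl⟩
      have h1 : Metric.infDist (h b) (T k) = 0 := Metric.infDist_zero_of_mem hmem
      have h2 : 0 < Metric.infDist (h b) (Fs k) := by
        have := hDpos k (h b)
        rw [hD] at this
        simp only at this
        rw [h1, add_zero] at this
        exact this
      simp [hg, hD, h1, div_self h2.ne']
  refine ⟨f, hfcont.continuousOn, fun x _ => ⟨hf0 x, hf1 x⟩, ?_, ?_⟩
  · -- oscillation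
    intro x hx
    have hxC : x ∉ C := fun hc => hx.2 (hCE hc)
    have hδ : 0 < Metric.infDist x C := ((hCclosed.notMem_iff_infDist_pos hCne).1 hxC)
    set δ := Metric.infDist x C with hδdef
    have hkey : ∀ z, dist z x ≤ δ/2 → |f z - f x| ≤ dist z x / δ := by
      intro z hz
      have hDzbound : ∀ k, δ ≤ D k z := by
        intro k
        have h1 : δ - δ/2 ≤ Metric.infDist z C := by
          have h2 := Metric.infDist_le_infDist_add_dist (x := x) (y := z) (s := C)
          have hxz : dist x z ≤ δ/2 := by rwa [dist_comm]
          rw [← hδdef] at h2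
          linarith
        have h3 : Metric.infDist z C ≤ Metric.infDist z (Fs k) :=
          Metric.infDist_le_infDist_of_subset (hFsub k) (hFne k)
        have h4 : Metric.infDist z C ≤ Metric.infDist z (T k) :=
          Metric.infDist_le_infDist_of_subset (hTsub k) (hTne k)
        rw [hD]
        simp only
        linarith
      have hterm : ∀ k, |w k * g k z - w k * g k x| ≤ w k * (dist z x / δ) := by
        intro k
        rw [← mul_sub, abs_mul, abs_of_nonneg (hw0 k)]
        apply mul_le_mul_of_nonneg_left ?_ (hw0 k)
        have hb := urysohn_diff_bound (hDpos k z) (hDpos k x)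
        -- hb : |g k z - g k x| ≤ dist z x / D k x  -- careful orientation
        calc |g k z - g k x| ≤ dist z x / D k z := by
              rw [abs_sub_comm]
              have hb2 := urysohn_diff_bound (hDpos k x) (hDpos k z)
              rw [dist_comm x z] at hb2
              exact hb2
          _ ≤ dist z x / δ :=
              div_le_div_of_nonneg_left dist_nonneg hδ (hDzbound k)
      have hsub : f z - f x = ∑' k, (w k * g k z - w k * g k x) :=
        (Summable.tsum_sub (hsummable z) (hsummable x)).symm
      have habs_sum : Summable fun k => |w k * g k z - w k * g k x| :=
        Summable.of_nonneg_of_le (fun k => abs_nonneg _) hterm (hwsum.mul_right _)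
      calc |f z - f x| = |∑' k, (w k * g k z - w k * g k x)| := by rw [hsub]
        _ ≤ ∑' k, |w k * g k z - w k * g k x| := by
            have := norm_tsum_le_tsum_norm (f := fun k => w k * g k z - w k * g k x) ?_
            · simpa [Real.norm_eq_abs] using this
            · simpa [Real.norm_eq_abs] using habs_sum
        _ ≤ ∑' k, w k * (dist z x / δ) := Summable.tsum_le_tsum hterm habs_sum (hwsum.mul_right _)
        _ = (∑' k, w k) * (dist z x / δ) := tsum_mul_right
        _ = dist z x / δ := by rw [hwtsum, one_mul]
    rw [upperScaledOsc]
    have hev : ∀ᶠ r in nhdsWithin (0:ℝ) (Set.Ioi 0),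
        (⨆ (y : ℝ) (_ : y ∈ Set.Icc (0:ℝ) 1) (_ : dist y x ≤ r),
          ENNReal.ofReal (dist (f y) (f x))) / ENNReal.ofReal r
        ≤ ENNReal.ofReal (1/δ) := by
      filter_upwards [Ioo_mem_nhdsGT_of_mem
        (show (0:ℝ) ∈ Set.Ico (0:ℝ) (δ/2) from ⟨le_refl _, half_pos hδ⟩)] with r hr
      obtain ⟨hr0, hrδ⟩ := hr
      have hsup : (⨆ (y : ℝ) (_ : y ∈ Set.Icc (0:ℝ) 1) (_ : dist y x ≤ r),
          ENNReal.ofReal (dist (f y) (f x))) ≤ ENNReal.ofReal (1/δ * r) := by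
        apply iSup_le; intro z; apply iSup_le; intro _; apply iSup_le; intro hzr
        apply ENNReal.ofReal_le_ofReal
        rw [Real.dist_eq]
        calc |f z - f x| ≤ dist z x / δ := hkey z (le_trans hzr hrδ.le)
          _ ≤ r / δ := (div_le_div_iff_of_pos_right hδ).2 hzr
          _ = 1/δ * r := by ring
      calc (⨆ (y : ℝ) (_ : y ∈ Set.Icc (0:ℝ) 1) (_ : dist y x ≤ r),
          ENNReal.ofReal (dist (f y) (f x))) / ENNReal.ofReal r
          ≤ ENNReal.ofReal (1/δ * r) / ENNReal.ofReal r :=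
            ENNReal.div_le_div_right hsup _
        _ = ENNReal.ofReal (1/δ) := by
            rw [ENNReal.ofReal_mul (by positivity)]
            rw [mul_div_assoc]
            rw [ENNReal.div_self (by simp [ENNReal.ofReal_eq_zero]; linarith : ENNReal.ofReal r ≠ 0) ENNReal.ofReal_ne_top]
            rw [mul_one]
    exact lt_of_le_of_lt (Filter.limsup_le_of_le (h := hev)) ENNReal.ofReal_lt_top
  · -- level sets
    intro y hy
    obtain ⟨d, hd⟩ := exists_bool_rep hy
    haveI : Infinite (ℕ → Bool) := by
      apply Infinite.of_injective (fun n : ℕ => (fun m : ℕ => decide (m = n)))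
      intro a b hab
      have := congrFun hab a
      simpa using this
    apply Set.infinite_of_injective_forall_mem
      (f := fun o : ℕ → Bool => h (fun n => if n % 2 = 0 then d (n / 2) else o (n / 2)))
    · intro o o' heq
      have hfun := hinj heq
      funext m
      have := congrFun hfun (2*m+1)
      have hmod : (2*m+1) % 2 ≠ 0 := by omega
      have hdiv : (2*m+1) / 2 = m := by omega
      simpa [hmod, hdiv] using this
    · intro o
      constructor
      · exact hE (hCE (Set.mem_range_self _))
      · show f (h (fun n => if n % 2 = 0 then d (n / 2) else o (n / 2))) = y
        rw [hfh]
        rw [← hd]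
        apply tsum_congr
        intro k
        have hmod : (2*k) % 2 = 0 := by omega
        have hdiv : (2*k) / 2 = k := by omega
        rw [hw]
        simp only [hmod, hdiv, if_pos rfl]
        cases d k <;> simp
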